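/- Let g(z) = Σ_{j=1}^t e^{a_j z + b_j} with real frequencies a_j, b_j ∈ ℂ, t ≥ 2, and δ(g) := min_{p≠q}|a_p − a_q|. Let W be the open (log 3/δ(g))-neighborhood of Trop(g) in ℝ. Then for every complex root ζ of g, Re(ζ) ∈ W. In particular, for every r ∈ Re(Z(g)) there exists w ∈ Trop(g) with |r − w| < log 3/δ(g). -/

import Mathlib

noncomputable section
section AuxHelpers

lemma sum_pow_dist_lt {t : ℕ} (j : Fin t) :
    ∑ i ∈ Finset.univ.erase j, ((1:ℝ)/3) ^ (Nat.dist i.val j.val) < 1 := by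
  have hG : ∀ n : ℕ, ∑ k ∈ Finset.range n, ((1:ℝ)/3)^(k+1) < 1/2 := by
    intro n
    have h1 : ∑ k ∈ Finset.range n, ((1:ℝ)/3)^k = ((1/3:ℝ)^n - 1)/((1/3) - 1) :=
      geom_sum_eq (by norm_num) n
    have h2 : ∑ k ∈ Finset.range n, ((1:ℝ)/3)^(k+1)
        = (1/3) * ∑ k ∈ Finset.range n, ((1:ℝ)/3)^k := by
      rw [Finset.mul_sum]
      exact Finset.sum_congr rfl (fun k _ => by ring)
    have h3 : (0:ℝ) < (1/3:ℝ)^n := by positivity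
    have h4 : ((1/3:ℝ)^n - 1)/((1/3) - 1) = (1 - (1/3)^n)*(3/2) := by ring
    rw [h2, h1, h4]; nlinarith
  set A := (Finset.univ.erase j).filter (fun i : Fin t => i.val < j.val) with hA
  set B := (Finset.univ.erase j).filter (fun i : Fin t => ¬ i.val < j.val) with hB
  have hsplit : ∑ i ∈ Finset.univ.erase j, ((1:ℝ)/3) ^ (Nat.dist i.val j.val)
      = ∑ i ∈ A, ((1:ℝ)/3) ^ (Nat.dist i.val j.val)
        + ∑ i ∈ B, ((1:ℝ)/3) ^ (Nat.dist i.val j.val) :=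
    (Finset.sum_filter_add_sum_filter_not _ _ _).symm
  have bound : ∀ (s : Finset (Fin t)) (g : Fin t → ℕ),
      (∀ i ∈ s, Nat.dist i.val j.val = g i + 1) →
      (∀ x ∈ s, ∀ y ∈ s, g x = g y → x = y) →
      (∀ i ∈ s, g i < t) →
      ∑ i ∈ s, ((1:ℝ)/3) ^ (Nat.dist i.val j.val) < 1/2 := by
    intro s g hg hinj hlt
    have h1 : ∑ i ∈ s, ((1:ℝ)/3) ^ (Nat.dist i.val j.val)
        = ∑ k ∈ s.image g, ((1:ℝ)/3)^(k+1) := by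
      rw [Finset.sum_image hinj]
      exact Finset.sum_congr rfl (fun i hi => by rw [hg i hi])
    have h2 : ∑ k ∈ s.image g, ((1:ℝ)/3)^(k+1) ≤ ∑ k ∈ Finset.range t, ((1:ℝ)/3)^(k+1) := by
      apply Finset.sum_le_sum_of_subset_of_nonneg
      · intro k hk
        obtain ⟨i, hi, rfl⟩ := Finset.mem_image.mp hk
        exact Finset.mem_range.mpr (hlt i hi)
      · intro k _ _; positivity
    calc ∑ i ∈ s, ((1:ℝ)/3) ^ (Nat.dist i.val j.val) ≤ ∑ k ∈ Finset.range t, ((1:ℝ)/3)^(k+1) := by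
          rw [h1]; exact h2
      _ < 1/2 := hG t
  have hAb : ∑ i ∈ A, ((1:ℝ)/3) ^ (Nat.dist i.val j.val) < 1/2 := by
    apply bound A (fun i => j.val - i.val - 1)
    · intro i hi
      have := (Finset.mem_filter.mp hi).2
      rw [Nat.dist_eq_sub_of_le (le_of_lt this)]
      omega
    · intro x hx y hy hxy
      have hx' := (Finset.mem_filter.mp hx).2
      have hy' := (Finset.mem_filter.mp hy).2
      exact Fin.ext (by omega)
    · intro i hi
      have := j.isLt
      omega
  have hBb : ∑ i ∈ B, ((1:ℝ)/3) ^ (Nat.dist i.val j.val) < 1/2 := by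
    apply bound B (fun i => i.val - j.val - 1)
    · intro i hi
      have h1 := (Finset.mem_filter.mp hi).2
      have h2 : i ≠ j := Finset.ne_of_mem_erase (Finset.mem_filter.mp hi).1
      have h3 : j.val < i.val := by
        rcases Nat.lt_or_ge j.val i.val with h | h
        · exact h
        · exact absurd (Fin.ext (by omega)) h2
      rw [Nat.dist_comm, Nat.dist_eq_sub_of_le (le_of_lt h3)]
      omega
    · intro x hx y hy hxy
      have hx1 := (Finset.mem_filter.mp hx).2
      have hx2 : x ≠ j := Finset.ne_of_mem_erase (Finset.mem_filter.mp hx).1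
      have hy1 := (Finset.mem_filter.mp hy).2
      have hy2 : y ≠ j := Finset.ne_of_mem_erase (Finset.mem_filter.mp hy).1
      have hx3 : j.val < x.val := by
        rcases Nat.lt_or_ge j.val x.val with h | h
        · exact h
        · exact absurd (Fin.ext (by omega)) hx2
      have hy3 : j.val < y.val := by
        rcases Nat.lt_or_ge j.val y.val with h | h
        · exact h
        · exact absurd (Fin.ext (by omega)) hy2
      exact Fin.ext (by omega)
    · intro i hi
      have := i.isLt
      omega
  rw [hsplit]; linarith

lemma gap_ge {t : ℕ} {a : Fin t → ℝ} (ha : StrictMono a) {δ : ℝ}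
    (hlb : ∀ p q : Fin t, p ≠ q → δ ≤ |a p - a q|) :
    ∀ (n : ℕ) (p q : Fin t), q.val = p.val + n → δ * n ≤ a q - a p := by
  intro n
  induction n with
  | zero =>
    intro p q h
    have : p = q := Fin.ext (by omega)
    subst this; simp
  | succ n ih =>
    intro p q h
    have hq' : p.val + n < t := by have := q.isLt; omega
    set q' : Fin t := ⟨p.val + n, hq'⟩ with hq'def
    have h1 := ih p q' rfl
    have hlt : q' < q := by
      rw [Fin.lt_def]; simp [hq'def]; omega
    have h2 : δ ≤ a q - a q' := by
      have h3 := hlb q q' (ne_of_gt hlt)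
      rwa [abs_of_pos (sub_pos.mpr (ha hlt))] at h3
    push_cast
    linarith

lemma dist_gap {t : ℕ} {a : Fin t → ℝ} (ha : StrictMono a) {δ : ℝ}
    (hlb : ∀ p q : Fin t, p ≠ q → δ ≤ |a p - a q|) (i j : Fin t) :
    δ * (Nat.dist i.val j.val : ℕ) ≤ |a i - a j| := by
  rcases le_total i.val j.val with h | h
  · rw [Nat.dist_eq_sub_of_le h, abs_sub_comm]
    have := gap_ge ha hlb (j.val - i.val) i j (by omega)
    exact this.trans (le_abs_self _)
  · rw [Nat.dist_comm, Nat.dist_eq_sub_of_le h]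
    have := gap_ge ha hlb (i.val - j.val) j i (by omega)
    exact this.trans (le_abs_self _)

end AuxHelpers

/-- The Archimedean tropical variety of a univariate exponential sum. -/
def Trop (t : ℕ) (a : Fin t → ℝ) (b : Fin t → ℂ) : Set ℝ :=
  {w | ∃ j k : Fin t, j ≠ k ∧
    (∀ i : Fin t, a i * w + (b i).re ≤ a j * w + (b j).re) ∧
    a j * w + (b j).re = a k * w + (b k).re}

/-- the real part of every complex root of `g` lies in the open
`log 3 / δ(g)`-neighborhood of `Trop(g)`. -/
theorem re_root_near_trop (t : ℕ) (ht : 2 ≤ t) (a : Fin t → ℝ) (b : Fin t → ℂ)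
    (ha : StrictMono a) (δ : ℝ)
    (hδ : IsLeast {d : ℝ | ∃ p q : Fin t, p ≠ q ∧ d = |a p - a q|} δ)
    (ζ : ℂ) (hζ : ∑ j, Complex.exp (a j * ζ + b j) = 0) :
    ∃ w ∈ Trop t a b, |ζ.re - w| < Real.log 3 / δ := by
  by_contra hcon
  push_neg at hcon
  set r := ζ.re with hr
  set ε := Real.log 3 / δ with hε
  obtain ⟨⟨p, q, hpq, hd⟩, hlb'⟩ := hδ
  have hδpos : 0 < δ := by
    rw [hd]; exact abs_pos.mpr (sub_ne_zero.mpr (fun h => hpq (ha.injective h)))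
  have hlb : ∀ p q : Fin t, p ≠ q → δ ≤ |a p - a q| := fun p q h => hlb' ⟨p, q, h, rfl⟩
  have hlog3 : 0 < Real.log 3 := Real.log_pos (by norm_num)
  have hεpos : 0 < ε := div_pos hlog3 hδpos
  have hδε : δ * ε = Real.log 3 := by
    rw [hε]; field_simp
  have hnotrop : ∀ w ∈ Set.Ioo (r - ε) (r + ε), w ∉ Trop t a b := by
    intro w hw hwt
    have h1 := hcon w hwt
    have h2 : |r - w| < ε := abs_lt.mpr ⟨by linarith [hw.1, hw.2], by linarith [hw.1, hw.2]⟩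
    linarith
  have htpos : 0 < t := by omega
  have argmax : ∀ w : ℝ, w ∉ Trop t a b →
      ∃ j : Fin t, ∀ i, i ≠ j → a i * w + (b i).re < a j * w + (b j).re := by
    intro w hw
    obtain ⟨j, -, hj⟩ := Finset.exists_max_image Finset.univ
      (fun i : Fin t => a i * w + (b i).re) ⟨⟨0, htpos⟩, Finset.mem_univ _⟩
    refine ⟨j, fun i hi => ?_⟩
    rcases lt_or_eq_of_le (hj i (Finset.mem_univ i)) with h | h
    · exact h
    · exact absurd ⟨j, i, hi.symm, fun i' => hj i' (Finset.mem_univ i'), h.symm⟩ hw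
  have hrI : r ∈ Set.Ioo (r - ε) (r + ε) := ⟨by linarith, by linarith⟩
  obtain ⟨j₀, hj₀⟩ := argmax r (hnotrop r hrI)
  have hucont : ∀ i : Fin t, Continuous (fun w : ℝ => a i * w + (b i).re) :=
    fun i => (continuous_const.mul continuous_id).add continuous_const
  set u : Set ℝ := {w | ∀ i, i ≠ j₀ → a i * w + (b i).re < a j₀ * w + (b j₀).re} with hu
  set v : Set ℝ := {w | ∃ i, i ≠ j₀ ∧ a j₀ * w + (b j₀).re < a i * w + (b i).re} with hv
  have huopen : IsOpen u := by
    have heq : u = ⋂ i : Fin t,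
        {w : ℝ | i ≠ j₀ → a i * w + (b i).re < a j₀ * w + (b j₀).re} := by
      ext w; simp [hu, Set.mem_iInter]
    rw [heq]
    apply isOpen_iInter_of_finite
    intro i
    by_cases hi : i = j₀
    · have : {w : ℝ | i ≠ j₀ → a i * w + (b i).re < a j₀ * w + (b j₀).re} = Set.univ := by
        ext w; simp [hi]
      rw [this]; exact isOpen_univ
    · have : {w : ℝ | i ≠ j₀ → a i * w + (b i).re < a j₀ * w + (b j₀).re}
          = {w : ℝ | a i * w + (b i).re < a j₀ * w + (b j₀).re} := by
        ext w; simp [hi]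
      rw [this]; exact isOpen_lt (hucont i) (hucont j₀)
  have hvopen : IsOpen v := by
    have heq : v = ⋃ i : Fin t,
        {w : ℝ | i ≠ j₀ ∧ a j₀ * w + (b j₀).re < a i * w + (b i).re} := by
      ext w; simp [hv, Set.mem_iUnion]
    rw [heq]
    apply isOpen_iUnion
    intro i
    by_cases hi : i = j₀
    · have : {w : ℝ | i ≠ j₀ ∧ a j₀ * w + (b j₀).re < a i * w + (b i).re} = ∅ := by
        ext w; simp [hi]
      rw [this]; exact isOpen_empty
    · have : {w : ℝ | i ≠ j₀ ∧ a j₀ * w + (b j₀).re < a i * w + (b i).re}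
          = {w : ℝ | a j₀ * w + (b j₀).re < a i * w + (b i).re} := by
        ext w; simp [hi]
      rw [this]; exact isOpen_lt (hucont j₀) (hucont i)
  have hcover : Set.Ioo (r - ε) (r + ε) ⊆ u ∪ v := by
    intro w hw
    obtain ⟨m, hm⟩ := argmax w (hnotrop w hw)
    by_cases hmj : m = j₀
    · left; intro i hi; subst hmj; exact hm i hi
    · right; exact ⟨m, hmj, hm j₀ (Ne.symm hmj)⟩
  have hune : (Set.Ioo (r - ε) (r + ε) ∩ u).Nonempty := ⟨r, hrI, hj₀⟩
  have hsub : ∀ w ∈ Set.Ioo (r - ε) (r + ε),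
      ∀ i, i ≠ j₀ → a i * w + (b i).re < a j₀ * w + (b j₀).re := by
    intro w hw
    rcases hcover hw with h | h
    · exact h
    · exfalso
      have hne : (Set.Ioo (r - ε) (r + ε) ∩ v).Nonempty := ⟨w, hw, h⟩
      obtain ⟨y, hy1, hy2, i, hi, hlt⟩ :=
        isPreconnected_Ioo u v huopen hvopen hcover hune hne
      exact absurd (hy2 i hi) (not_lt.mpr (le_of_lt hlt))
  have hkey : ∀ i : Fin t, i ≠ j₀ →
      (Nat.dist i.val j₀.val : ℝ) * Real.log 3
        ≤ (a j₀ * r + (b j₀).re) - (a i * r + (b i).re) := by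
    intro i hi
    have hDpos : 0 < (a j₀ * r + (b j₀).re) - (a i * r + (b i).re) :=
      sub_pos.mpr (hj₀ i hi)
    have hstep : ∀ s : ℝ, |s| < ε →
        (a i - a j₀) * s < (a j₀ * r + (b j₀).re) - (a i * r + (b i).re) := by
      intro s hs
      rw [abs_lt] at hs
      have hmem : r + s ∈ Set.Ioo (r - ε) (r + ε) := ⟨by linarith [hs.1], by linarith [hs.2]⟩
      have h := hsub (r + s) hmem i hi
      nlinarith [h]
    have habsc : |a i - a j₀| * ε ≤ (a j₀ * r + (b j₀).re) - (a i * r + (b i).re) := by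
      by_contra hcon2
      push_neg at hcon2
      by_cases hc0 : a i - a j₀ = 0
      · rw [hc0] at hcon2; simp at hcon2; linarith
      · have h1 : |((a j₀ * r + (b j₀).re) - (a i * r + (b i).re)) / (a i - a j₀)| < ε := by
          rw [abs_div, abs_of_pos hDpos, div_lt_iff₀ (abs_pos.mpr hc0)]
          linarith [mul_comm |a i - a j₀| ε]
        have h3 := hstep _ h1
        rw [mul_div_cancel₀ _ hc0] at h3
        exact lt_irrefl _ h3
    have hdg := dist_gap ha hlb i j₀
    calc (Nat.dist i.val j₀.val : ℝ) * Real.log 3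
        = (δ * (Nat.dist i.val j₀.val : ℝ)) * ε := by rw [← hδε]; ring
      _ ≤ |a i - a j₀| * ε := mul_le_mul_of_nonneg_right hdg (le_of_lt hεpos)
      _ ≤ _ := habsc
  have habs : ∀ i : Fin t,
      ‖Complex.exp (a i * ζ + b i)‖ = Real.exp (a i * r + (b i).re) := by
    intro i
    rw [Complex.norm_exp]
    congr 1
    simp [Complex.add_re, Complex.mul_re, hr]
  have hthird : Real.exp (-Real.log 3) = 1/3 := by
    rw [Real.exp_neg, Real.exp_log (by norm_num : (0:ℝ) < 3)]; norm_num
  have hterm : ∀ i ∈ Finset.univ.erase j₀,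
      Real.exp (a i * r + (b i).re)
        ≤ Real.exp (a j₀ * r + (b j₀).re) * ((1:ℝ)/3) ^ (Nat.dist i.val j₀.val) := by
    intro i hi
    have hk := hkey i (Finset.ne_of_mem_erase hi)
    have h1 : Real.exp (a i * r + (b i).re)
        ≤ Real.exp ((a j₀ * r + (b j₀).re) - (Nat.dist i.val j₀.val : ℝ) * Real.log 3) :=
      Real.exp_le_exp.mpr (by linarith)
    have h2 : Real.exp ((a j₀ * r + (b j₀).re) - (Nat.dist i.val j₀.val : ℝ) * Real.log 3)
        = Real.exp (a j₀ * r + (b j₀).re) * ((1:ℝ)/3) ^ (Nat.dist i.val j₀.val) := by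
      rw [← hthird, ← Real.exp_nat_mul, ← Real.exp_add]
      congr 1; ring
    rw [← h2]; exact h1
  have hsum : ‖Complex.exp (a j₀ * ζ + b j₀)‖
      ≤ ∑ i ∈ Finset.univ.erase j₀, ‖Complex.exp (a i * ζ + b i)‖ := by
    have h0 := Finset.add_sum_erase Finset.univ
      (fun i : Fin t => Complex.exp (a i * ζ + b i)) (Finset.mem_univ j₀)
    have h1 : Complex.exp (a j₀ * ζ + b j₀)
        = -∑ i ∈ Finset.univ.erase j₀, Complex.exp (a i * ζ + b i) :=
      eq_neg_of_add_eq_zero_left (h0.trans hζ)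
    rw [h1, norm_neg]
    exact norm_sum_le _ _
  have hM := Real.exp_pos (a j₀ * r + (b j₀).re)
  have hS := sum_pow_dist_lt j₀
  have hfinal : ∑ i ∈ Finset.univ.erase j₀, ‖Complex.exp (a i * ζ + b i)‖
      < Real.exp (a j₀ * r + (b j₀).re) := by
    calc ∑ i ∈ Finset.univ.erase j₀, ‖Complex.exp (a i * ζ + b i)‖
        = ∑ i ∈ Finset.univ.erase j₀, Real.exp (a i * r + (b i).re) :=
          Finset.sum_congr rfl (fun i _ => habs i)
      _ ≤ ∑ i ∈ Finset.univ.erase j₀,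
            Real.exp (a j₀ * r + (b j₀).re) * ((1:ℝ)/3) ^ (Nat.dist i.val j₀.val) :=
          Finset.sum_le_sum hterm
      _ = Real.exp (a j₀ * r + (b j₀).re)
            * ∑ i ∈ Finset.univ.erase j₀, ((1:ℝ)/3) ^ (Nat.dist i.val j₀.val) := by
          rw [Finset.mul_sum]
      _ < Real.exp (a j₀ * r + (b j₀).re) * 1 := mul_lt_mul_of_pos_left hS hM
      _ = _ := mul_one _
  rw [habs j₀] at hsum
  linarith
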